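/- Under binary supermodular cost functions with c_i(∅)=0, a Lorenz dominating complete allocation always exists; moreover its sorted cost profile consists of ⌈c*/n⌉ repeated (c* mod n) times followed by ⌊c*/n⌋ repeated n - (c* mod n) times, where c* is the minimum social cost. -/

import Mathlib

/-- `A` is a complete allocation (partition) of the chores `Fin m` among `n` agents. -/
def IsPartition {n m : ℕ} (A : Fin n → Finset (Fin m)) : Prop :=
  (∀ i j : Fin n, i ≠ j → Disjoint (A i) (A j)) ∧
    Finset.univ.biUnion A = (Finset.univ : Finset (Fin m))

/-- Binary marginals for a nonnegative-integer-valued cost function. -/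
def BinaryMarginals {m : ℕ} (c : Finset (Fin m) → ℕ) : Prop :=
  ∀ (S : Finset (Fin m)) (a : Fin m), a ∉ S →
    c (insert a S) = c S ∨ c (insert a S) = c S + 1

/-- Supermodularity (increasing marginals), in addition form. -/
def Supermod {m : ℕ} (c : Finset (Fin m) → ℕ) : Prop :=
  ∀ (S T : Finset (Fin m)) (a : Fin m), S ⊆ T → a ∉ T →
    c (insert a S) + c T ≤ c (insert a T) + c S

/-- The sum of the `k` largest entries of the profile `p` (sum of the `k` largest
components of the sorted profile). -/
def topSum {n : ℕ} (p : Fin n → ℕ) (k : ℕ) : ℕ :=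
  (Finset.univ.powersetCard k).sup fun S => ∑ i ∈ S, p i

/-- Allocation `A` Lorenz dominates allocation `B` (for nonincreasing sorted cost
profiles): every prefix sum of the sorted cost profile of `A` is at most the
corresponding prefix sum for `B`. -/
def LorenzDominates {n m : ℕ} (c : Fin n → Finset (Fin m) → ℕ)
    (A B : Fin n → Finset (Fin m)) : Prop :=
  ∀ k : ℕ, topSum (fun i => c i (A i)) k ≤ topSum (fun i => c i (B i)) k

open Finset

lemma binmarg_insert_le {m : ℕ} {c : Finset (Fin m) → ℕ} (h : BinaryMarginals c)
    (S : Finset (Fin m)) (a : Fin m) : c (insert a S) ≤ c S + 1 := by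
  by_cases ha : a ∈ S
  · rw [Finset.insert_eq_self.mpr ha]; omega
  · rcases h S a ha with h' | h' <;> omega

lemma supermod_zero {m : ℕ} {c : Finset (Fin m) → ℕ} (h0 : c ∅ = 0) (hsm : Supermod c) :
    ∀ S : Finset (Fin m), (∀ a ∈ S, c S ≤ c (S.erase a)) → c S = 0 := by
  intro S
  induction S using Finset.strongInduction with
  | _ S ih =>
    intro hS
    rcases S.eq_empty_or_nonempty with rfl | ⟨a, ha⟩
    · exact h0
    · have hkey : c (S.erase a) = 0 := by
        refine ih (S.erase a) (Finset.erase_ssubset ha) ?_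
        intro b hb
        have hbS : b ∈ S := Finset.mem_of_mem_erase hb
        have hsub : (S.erase a).erase b ⊆ S.erase b :=
          Finset.erase_subset_erase b (Finset.erase_subset a S)
        have hnb : b ∉ S.erase b := Finset.notMem_erase b S
        have h1 := hsm ((S.erase a).erase b) (S.erase b) b hsub hnb
        rw [Finset.insert_erase hb, Finset.insert_erase hbS] at h1
        have h2 := hS b hbS
        omega
      have := hS a ha
      omega

lemma exists_erase_cost {m : ℕ} {c : Finset (Fin m) → ℕ} (h0 : c ∅ = 0)
    (hmarg : BinaryMarginals c) (hsm : Supermod c) {S : Finset (Fin m)} (hS : 0 < c S) :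
    ∃ a ∈ S, c (S.erase a) + 1 = c S := by
  by_contra hcon
  push_neg at hcon
  have hall : ∀ a ∈ S, c S ≤ c (S.erase a) := by
    intro a ha
    have h1 := hmarg (S.erase a) a (Finset.notMem_erase a S)
    rw [Finset.insert_erase ha] at h1
    have := hcon a ha
    omega
  have := supermod_zero h0 hsm S hall
  omega

lemma topSum_le_balanced {n : ℕ} (p : Fin n → ℕ) (q r : ℕ)
    (hp : ∀ i, p i = q ∨ p i = q + 1)
    (hc : (univ.filter (fun i => p i = q + 1)).card = r) (k : ℕ) :
    topSum p k ≤ k * q + min k r := by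
  classical
  apply Finset.sup_le
  intro S hS
  rw [Finset.mem_powersetCard] at hS
  obtain ⟨-, hcard⟩ := hS
  have h1 : ∑ i ∈ S, p i ≤ ∑ i ∈ S, (q + if p i = q + 1 then 1 else 0) := by
    apply Finset.sum_le_sum; intro i _; rcases hp i with h | h <;> simp [h]
  have h2 : ∑ i ∈ S, (q + if p i = q + 1 then 1 else 0)
      = S.card * q + (S.filter (fun i => p i = q + 1)).card := by
    rw [Finset.sum_add_distrib, Finset.sum_const, smul_eq_mul, Finset.sum_boole]
    simp
  rw [hcard] at h2
  have h3 : (S.filter (fun i => p i = q + 1)).card ≤ min k r := by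
    refine le_min ?_ ?_
    · calc (S.filter (fun i => p i = q + 1)).card ≤ S.card :=
            Finset.card_le_card (Finset.filter_subset _ _)
        _ = k := hcard
    · rw [← hc]
      exact Finset.card_le_card (Finset.filter_subset_filter _ (Finset.subset_univ S))
  omega

lemma topSum_ge {n : ℕ} (p : Fin n → ℕ) (q r k : ℕ) (hk : k ≤ n)
    (hsum : n * q + r ≤ ∑ i, p i) : k * q + min k r ≤ topSum p k := by
  classical
  rcases Nat.eq_zero_or_pos k with rfl | hkpos
  · simp
  have hne : (Finset.univ.powersetCard k (α := Fin n)).Nonempty := by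
    apply Finset.powersetCard_nonempty.mpr
    simpa using hk
  obtain ⟨S, hSmem, hSmax⟩ := Finset.exists_max_image _ (fun S => ∑ i ∈ S, p i) hne
  rw [Finset.mem_powersetCard] at hSmem
  obtain ⟨-, hScard⟩ := hSmem
  set t := ∑ i ∈ S, p i with ht
  have htop : t ≤ topSum p k := by
    apply Finset.le_sup (f := fun S => ∑ i ∈ S, p i)
    rw [Finset.mem_powersetCard]; exact ⟨Finset.subset_univ S, hScard⟩
  have hswap : ∀ i, i ∉ S → ∀ j ∈ S, p i ≤ p j := by
    intro i hi j hj
    have hiT : i ∉ S.erase j := fun h => hi (Finset.mem_of_mem_erase h)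
    have hTmem : insert i (S.erase j) ∈ Finset.univ.powersetCard k := by
      rw [Finset.mem_powersetCard]
      refine ⟨Finset.subset_univ _, ?_⟩
      rw [Finset.card_insert_of_notMem hiT, Finset.card_erase_of_mem hj, hScard]
      omega
    have h1 := hSmax _ hTmem
    rw [Finset.sum_insert hiT] at h1
    have h2 : ∑ x ∈ S.erase j, p x + p j = t := Finset.sum_erase_add S p hj
    omega
  have hout : ∀ i, i ∉ S → k * p i ≤ t := by
    intro i hi
    calc k * p i = ∑ _j ∈ S, p i := by rw [Finset.sum_const, hScard, smul_eq_mul]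
      _ ≤ t := Finset.sum_le_sum (fun j hj => hswap i hi j hj)
  by_contra hcon
  push_neg at hcon
  have htlt : t < k * q + min k r := lt_of_le_of_lt htop hcon
  have hq : ∀ i, i ∉ S → p i ≤ q := by
    intro i hi
    have h1 := hout i hi
    have h2 : k * p i < k * (q + 1) := by
      have : min k r ≤ k := min_le_left _ _
      calc k * p i ≤ t := h1
        _ < k * q + min k r := htlt
        _ ≤ k * q + k := by omega
        _ = k * (q + 1) := by ring
    have := Nat.lt_of_mul_lt_mul_left h2
    omega
  have hcompl : ∑ i ∈ Finset.univ \ S, p i ≤ (n - k) * q := by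
    have hcard : (Finset.univ \ S).card = n - k := by
      rw [Finset.card_sdiff_of_subset (Finset.subset_univ S), hScard, Finset.card_univ, Fintype.card_fin]
    calc ∑ i ∈ Finset.univ \ S, p i ≤ ∑ _i ∈ Finset.univ \ S, q :=
          Finset.sum_le_sum (fun i hi => hq i (Finset.mem_sdiff.mp hi).2)
      _ = (n - k) * q := by rw [Finset.sum_const, hcard, smul_eq_mul]
  have hsplit : ∑ i, p i = t + ∑ i ∈ Finset.univ \ S, p i := by
    rw [ht, add_comm]
    exact (Finset.sum_sdiff (Finset.subset_univ S)).symm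
  have he : k * q + (n - k) * q = n * q := by
    rw [← add_mul]; congr 1; omega
  have hmr : min k r ≤ r := min_le_right _ _
  omega

/-- under binary supermodular costs, a Lorenz dominating complete
allocation exists, and its (sorted) cost profile consists of `⌈c*/n⌉` repeated
`c* mod n` times followed by `⌊c*/n⌋` repeated `n - c* mod n` times. -/
theorem exists_lorenz_dominating_allocation (n m : ℕ) (hn : 1 ≤ n)
    (c : Fin n → Finset (Fin m) → ℕ)
    (hmarg : ∀ i, BinaryMarginals (c i)) (hsuper : ∀ i, Supermod (c i))
    (h0 : ∀ i, c i ∅ = 0)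
    (cstar : ℕ)
    (hcstar : IsLeast {s : ℕ | ∃ A : Fin n → Finset (Fin m), IsPartition A ∧
        s = ∑ i, c i (A i)} cstar) :
    ∃ A : Fin n → Finset (Fin m), IsPartition A ∧
      (∀ B : Fin n → Finset (Fin m), IsPartition B → LorenzDominates c A B) ∧
      (Multiset.map (fun i => c i (A i)) (Finset.univ.val : Multiset (Fin n))) =
        Multiset.replicate (cstar % n) ((cstar + n - 1) / n) +
          Multiset.replicate (n - cstar % n) (cstar / n) := by
  classical
  obtain ⟨hmem, hlb⟩ := hcstar
  have hlb' : ∀ B : Fin n → Finset (Fin m), IsPartition B → cstar ≤ ∑ i, c i (B i) :=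
    fun B hB => hlb ⟨B, hB, rfl⟩
  obtain ⟨A0, hA0, hA0sum⟩ := hmem
  set P : Finset (Fin n → Finset (Fin m)) :=
    univ.filter (fun A => IsPartition A ∧ ∑ i, c i (A i) = cstar) with hPdef
  have hPne : P.Nonempty := ⟨A0, by simp [hPdef, hA0, hA0sum.symm]⟩
  obtain ⟨A, hAP, hAmin⟩ := Finset.exists_min_image P (fun A => ∑ i, (c i (A i))^2) hPne
  rw [hPdef, Finset.mem_filter] at hAP
  obtain ⟨-, hA, hAsum⟩ := hAP
  -- balance via exchange
  have hbal : ∀ i j, c i (A i) ≤ c j (A j) + 1 := by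
    by_contra hcon
    push_neg at hcon
    obtain ⟨i, j, hij⟩ := hcon
    have hne : i ≠ j := by rintro rfl; omega
    have hpos : 0 < c i (A i) := by omega
    obtain ⟨a, haA, hera⟩ := exists_erase_cost (h0 i) (hmarg i) (hsuper i) hpos
    have hanj : a ∉ A j := Finset.disjoint_left.mp (hA.1 i j hne) haA
    set B : Fin n → Finset (Fin m) :=
      Function.update (Function.update A i ((A i).erase a)) j (insert a (A j)) with hBdef
    have hBi : B i = (A i).erase a := by
      rw [hBdef, Function.update_of_ne hne, Function.update_self]
    have hBj : B j = insert a (A j) := by rw [hBdef, Function.update_self]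
    have hBt : ∀ t, t ≠ i → t ≠ j → B t = A t := by
      intro t h1 h2; rw [hBdef, Function.update_of_ne h2, Function.update_of_ne h1]
    have key : ∀ u x, x ∈ B u → (x = a ∧ u = j) ∨ (x ≠ a ∧ x ∈ A u) := by
      intro u x hx
      by_cases hui : u = i
      · subst hui; rw [hBi, Finset.mem_erase] at hx; exact Or.inr ⟨hx.1, hx.2⟩
      by_cases huj : u = j
      · subst huj; rw [hBj, Finset.mem_insert] at hx
        rcases hx with rfl | hx
        · exact Or.inl ⟨rfl, rfl⟩
        · rcases eq_or_ne x a with rfl | hxa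
          · exact absurd hx hanj
          · exact Or.inr ⟨hxa, hx⟩
      · rw [hBt u hui huj] at hx
        rcases eq_or_ne x a with rfl | hxa
        · exact absurd hx (Finset.disjoint_left.mp (hA.1 i u (fun h => hui h.symm)) haA)
        · exact Or.inr ⟨hxa, hx⟩
    have hBpart : IsPartition B := by
      constructor
      · intro s t hst
        rw [Finset.disjoint_left]
        intro x hxs hxt
        rcases key s x hxs with ⟨hxeq, hseq⟩ | ⟨hxa, hxs'⟩
        · rcases key t x hxt with ⟨-, hteq⟩ | ⟨hxa', -⟩
          · exact hst (hseq.trans hteq.symm)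
          · exact hxa' hxeq
        · rcases key t x hxt with ⟨hxeq, -⟩ | ⟨-, hxt'⟩
          · exact hxa hxeq
          · exact Finset.disjoint_left.mp (hA.1 s t hst) hxs' hxt'
      · rw [Finset.eq_univ_iff_forall]
        intro x
        rw [Finset.mem_biUnion]
        have hx : ∃ u, x ∈ A u := by
          have hx2 : x ∈ Finset.univ.biUnion A := by rw [hA.2]; exact Finset.mem_univ x
          rcases Finset.mem_biUnion.mp hx2 with ⟨u, -, hu⟩; exact ⟨u, hu⟩
        rcases eq_or_ne x a with rfl | hxa
        · exact ⟨j, Finset.mem_univ j, by rw [hBj]; exact Finset.mem_insert_self _ _⟩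
        · obtain ⟨u, hu⟩ := hx
          by_cases hui : u = i
          · exact ⟨i, Finset.mem_univ i, by
              rw [hBi]; exact Finset.mem_erase.mpr ⟨hxa, hui ▸ hu⟩⟩
          by_cases huj : u = j
          · exact ⟨j, Finset.mem_univ j, by
              rw [hBj]; exact Finset.mem_insert_of_mem (huj ▸ hu)⟩
          · exact ⟨u, Finset.mem_univ u, by rw [hBt u hui huj]; exact hu⟩
    have split : ∀ h : Fin n → ℕ,
        ∑ t, h t = ∑ t ∈ univ \ {i, j}, h t + (h i + h j) := by
      intro h
      rw [← Finset.sum_sdiff (Finset.subset_univ {i, j}), Finset.sum_pair hne]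
    have hrest : ∑ t ∈ univ \ ({i, j} : Finset (Fin n)), c t (B t)
        = ∑ t ∈ univ \ ({i, j} : Finset (Fin n)), c t (A t) := by
      apply Finset.sum_congr rfl
      intro t htm
      rw [Finset.mem_sdiff, Finset.mem_insert, Finset.mem_singleton] at htm
      push_neg at htm
      rw [hBt t htm.2.1 htm.2.2]
    have hrest2 : ∑ t ∈ univ \ ({i, j} : Finset (Fin n)), (c t (B t))^2
        = ∑ t ∈ univ \ ({i, j} : Finset (Fin n)), (c t (A t))^2 := by
      apply Finset.sum_congr rfl
      intro t htm
      rw [Finset.mem_sdiff, Finset.mem_insert, Finset.mem_singleton] at htm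
      push_neg at htm
      rw [hBt t htm.2.1 htm.2.2]
    have hjle : c j (B j) ≤ c j (A j) + 1 := by
      rw [hBj]; exact binmarg_insert_le (hmarg j) _ _
    have hiB : c i (B i) + 1 = c i (A i) := by rw [hBi]; exact hera
    have eA := split (fun t => c t (A t))
    have eB := split (fun t => c t (B t))
    rw [hrest] at eB
    have hBge := hlb' B hBpart
    have hjeq : c j (B j) = c j (A j) + 1 := by omega
    have hBsum : ∑ t, c t (B t) = cstar := by omega
    have hBP : B ∈ P := by
      rw [hPdef, Finset.mem_filter]
      exact ⟨Finset.mem_univ B, hBpart, hBsum⟩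
    have hsq := hAmin B hBP
    have eA2 := split (fun t => (c t (A t))^2)
    have eB2 := split (fun t => (c t (B t))^2)
    rw [hrest2] at eB2
    have hlt : (c i (B i))^2 + (c j (B j))^2 < (c i (A i))^2 + (c j (A j))^2 := by
      nlinarith [hiB, hjeq, hij]
    omega
  -- profile characterization
  set p : Fin n → ℕ := fun i => c i (A i) with hp
  have hune : (univ : Finset (Fin n)).Nonempty := ⟨⟨0, hn⟩, Finset.mem_univ _⟩
  obtain ⟨i0, -, hi0⟩ := Finset.exists_min_image univ p hune
  set mn := p i0 with hmn
  have hbal' : ∀ i j, p i ≤ p j + 1 := hbal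
  have hup : ∀ i, p i = mn ∨ p i = mn + 1 := by
    intro i
    have h1 := hi0 i (Finset.mem_univ i)
    have h2 := hbal' i i0
    omega
  have ha' : (univ.filter (fun i => p i = mn + 1)).card = cstar % n ∧ mn = cstar / n := by
    set a' := (univ.filter (fun i => p i = mn + 1)).card with ha'def
    have hsum_eq : ∑ i, p i = n * mn + a' := by
      have h1 : ∀ i ∈ univ, p i = mn + if p i = mn + 1 then 1 else 0 := by
        intro i _; rcases hup i with h | h <;> simp [h]
      rw [Finset.sum_congr rfl h1, Finset.sum_add_distrib, Finset.sum_const, Finset.sum_boole]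
      simp [Finset.card_univ, mul_comm]; rfl
    have ha'lt : a' < n := by
      have hsub : univ.filter (fun i => p i = mn + 1) ⊆ univ.erase i0 := by
        intro x hx
        rw [Finset.mem_filter] at hx
        refine Finset.mem_erase.mpr ⟨?_, Finset.mem_univ x⟩
        intro h; rw [h] at hx; omega
      calc a' ≤ (univ.erase i0).card := Finset.card_le_card hsub
        _ = n - 1 := by rw [Finset.card_erase_of_mem (Finset.mem_univ i0), Finset.card_univ,
              Fintype.card_fin]
        _ < n := by omega
    have hcs : cstar = n * mn + a' := by rw [← hAsum]; exact hsum_eq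
    have hdm := (Nat.div_mod_unique (show 0 < n by omega)).mpr
      (⟨by omega, ha'lt⟩ : a' + n * mn = cstar ∧ a' < n)
    exact ⟨hdm.2.symm, hdm.1.symm⟩
  obtain ⟨hcount, hmnq⟩ := ha'
  have hcs : cstar = n * mn + cstar % n := by
    conv_lhs => rw [← Nat.div_add_mod cstar n]
    rw [← hmnq]
  have hrlt : cstar % n < n := Nat.mod_lt _ (by omega)
  -- multiset identity
  have hmult : Multiset.map p (univ.val : Multiset (Fin n)) =
      Multiset.replicate (cstar % n) ((cstar + n - 1) / n) +
        Multiset.replicate (n - cstar % n) (cstar / n) := by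
    rw [← hmnq]
    have hdecomp : (univ.val : Multiset (Fin n)) =
        Multiset.filter (fun i => p i = mn + 1) univ.val
          + Multiset.filter (fun i => ¬ p i = mn + 1) univ.val :=
      (Multiset.filter_add_not _ _).symm
    have hcard1 : Multiset.card (Multiset.filter (fun i => p i = mn + 1) univ.val)
        = cstar % n := by
      rw [← Finset.filter_val]; exact hcount
    have hcard2 : Multiset.card (Multiset.filter (fun i => ¬ p i = mn + 1) univ.val)
        = n - cstar % n := by
      have htot := congrArg Multiset.card hdecomp
      rw [Multiset.card_add, hcard1] at htot
      have hcu : Multiset.card ((univ : Finset (Fin n)).val) = n := by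
        rw [← Finset.card_def]; exact Finset.card_fin n
      rw [hcu] at htot
      omega
    rcases Nat.eq_zero_or_pos (cstar % n) with hr0 | hrpos
    · rw [hr0]
      simp only [Multiset.replicate_zero, zero_add, Nat.sub_zero]
      apply Multiset.eq_replicate.mpr
      constructor
      · simp [Finset.card_univ]
      · intro b hb
        obtain ⟨i, hi, rfl⟩ := Multiset.mem_map.mp hb
        rcases hup i with h | h
        · exact h
        · exfalso
          have hmem : i ∈ univ.filter (fun i => p i = mn + 1) := by
            rw [Finset.mem_filter]; exact ⟨Finset.mem_univ i, h⟩
          rw [Finset.card_eq_zero.mp (hcount.trans hr0)] at hmem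
          exact absurd hmem (Finset.notMem_empty i)
    · have hceil : (cstar + n - 1) / n = mn + 1 := by
        have hx : n * (mn + 1) = n * mn + n := by ring
        have he : cstar + n - 1 = (cstar % n - 1) + n * (mn + 1) := by
          rw [hx]; omega
        rw [he, Nat.add_mul_div_left _ _ (show 0 < n by omega),
          Nat.div_eq_of_lt (by omega)]
        omega
      rw [hceil, hdecomp, Multiset.map_add]
      congr 1
      · apply Multiset.eq_replicate.mpr
        refine ⟨by rw [Multiset.card_map]; exact hcard1, ?_⟩
        intro b hb
        obtain ⟨i, hi, rfl⟩ := Multiset.mem_map.mp hb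
        exact (Multiset.mem_filter.mp hi).2
      · apply Multiset.eq_replicate.mpr
        refine ⟨by rw [Multiset.card_map]; exact hcard2, ?_⟩
        intro b hb
        obtain ⟨i, hi, rfl⟩ := Multiset.mem_map.mp hb
        have h2 := (Multiset.mem_filter.mp hi).2
        rcases hup i with h | h
        · exact h
        · exact absurd h h2
  refine ⟨A, hA, ?_, hmult⟩
  intro B hB k
  show topSum p k ≤ topSum (fun i => c i (B i)) k
  rcases le_or_gt k n with hk | hk
  · calc topSum p k ≤ k * mn + min k (cstar % n) :=
        topSum_le_balanced p mn (cstar % n) hup hcount k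
      _ ≤ topSum (fun i => c i (B i)) k := by
          apply topSum_ge _ mn (cstar % n) k hk
          have h1 := hlb' B hB
          omega
  · have hz : topSum p k = 0 := by
      unfold topSum
      convert Finset.sup_empty
      rw [Finset.eq_empty_iff_forall_notMem]
      intro S hS
      rw [Finset.mem_powersetCard] at hS
      have h1 := Finset.card_le_card hS.1
      rw [hS.2, Finset.card_univ, Fintype.card_fin] at h1
      omega
      rfl
    rw [hz]
    exact Nat.zero_le _
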